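/- Let p > 1, let n be a positive integer, and let x_1, …, x_n ≥ 0. Define a_i = (x_1 + ⋯ + x_i)/i and let m_i be the lower median of x_1, …, x_i. Then Σ_{i=1}^n |m_i − a_i|^p ≤ 2^{1−p} (p/(p−1))^p Σ_{i=1}^n x_i^p. -/

import Mathlib

open MeasureTheory Set Filter

noncomputable def sortAsc (l : List ℝ) : List ℝ := l.mergeSort (· ≤ ·)
noncomputable def sortDesc (l : List ℝ) : List ℝ := (sortAsc l).reverse
noncomputable def listLowerMedian (l : List ℝ) : ℝ := (sortAsc l).getD ((l.length - 1) / 2) 0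
def seg (x : ℕ → ℝ) (i : ℕ) : List ℝ := (List.range i).map (fun j => x (j+1))

noncomputable def topSum (k : ℕ) (l : List ℝ) : ℝ := ((sortDesc l).take k).sum

theorem sortAsc_perm (l : List ℝ) : (sortAsc l).Perm l := List.mergeSort_perm l _
theorem sortAsc_sorted (l : List ℝ) : (sortAsc l).Pairwise (· ≤ ·) := List.pairwise_mergeSort' (fun a b : ℝ => a ≤ b) l
theorem sortAsc_length (l : List ℝ) : (sortAsc l).length = l.length := (sortAsc_perm l).length_eq
theorem sortDesc_perm (l : List ℝ) : (sortDesc l).Perm l :=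
  (List.reverse_perm _).trans (sortAsc_perm l)
theorem sortDesc_length (l : List ℝ) : (sortDesc l).length = l.length := (sortDesc_perm l).length_eq
theorem sortDesc_sorted (l : List ℝ) : (sortDesc l).Pairwise (· ≥ ·) := by
  rw [sortDesc, List.pairwise_reverse]
  exact sortAsc_sorted l

theorem eq_sortDesc {l m : List ℝ} (h : m.Perm l) (hs : m.Pairwise (· ≥ ·)) : sortDesc l = m := by
  have : IsAntisymm ℝ (· ≥ ·) := ⟨fun a b h1 h2 => le_antisymm h2 h1⟩
  exact List.Perm.eq_of_pairwise (fun a b _ _ h1 h2 => le_antisymm h2 h1) (sortDesc_sorted l) hs ((sortDesc_perm l).trans h.symm)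

theorem sortDesc_ne_nil {l : List ℝ} (hl : l ≠ []) : sortDesc l ≠ [] := by
  intro h
  have := sortDesc_length l
  rw [h] at this
  exact hl (List.length_eq_zero_iff.mp this.symm)

/-- the head of sortDesc is a maximum -/
theorem le_headI_sortDesc {l : List ℝ} {a : ℝ} (ha : a ∈ l) : a ≤ (sortDesc l).headI := by
  obtain ⟨M, t, ht⟩ : ∃ M t, sortDesc l = M :: t := by
    cases h : sortDesc l with
    | nil => exact absurd h (sortDesc_ne_nil (by rintro rfl; simp at ha))
    | cons M t => exact ⟨M, t, rfl⟩
  have ha' : a ∈ sortDesc l := (sortDesc_perm l).mem_iff.mpr ha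
  rw [ht] at ha' ⊢
  simp only [List.headI_cons]
  rcases List.mem_cons.mp ha' with rfl | h
  · exact le_rfl
  · exact (List.pairwise_cons.mp (ht ▸ sortDesc_sorted l)).1 a h

theorem headI_sortDesc_mem {l : List ℝ} (hl : l ≠ []) : (sortDesc l).headI ∈ l := by
  apply (sortDesc_perm l).mem_iff.mp
  cases h : sortDesc l with
  | nil => exact absurd h (sortDesc_ne_nil hl)
  | cons M t => simp [h]

theorem sortDesc_erase_headI {l : List ℝ} (hl : l ≠ []) :
    sortDesc (l.erase (sortDesc l).headI) = (sortDesc l).tail := by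
  obtain ⟨M, t, ht⟩ : ∃ M t, sortDesc l = M :: t := by
    cases h : sortDesc l with
    | nil => exact absurd h (sortDesc_ne_nil hl)
    | cons M t => exact ⟨M, t, rfl⟩
  rw [ht]
  apply eq_sortDesc
  · have h1 : (M :: t).Perm l := ht ▸ sortDesc_perm l
    have := h1.erase M
    simpa using this
  · exact (List.pairwise_cons.mp (ht ▸ sortDesc_sorted l)).2

theorem topSum_zero (l : List ℝ) : topSum 0 l = 0 := by simp [topSum]

theorem topSum_succ {l : List ℝ} (hl : l ≠ []) (k : ℕ) :
    topSum (k+1) l = (sortDesc l).headI + topSum k (l.erase (sortDesc l).headI) := by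
  obtain ⟨M, t, ht⟩ : ∃ M t, sortDesc l = M :: t := by
    cases h : sortDesc l with
    | nil => exact absurd h (sortDesc_ne_nil hl)
    | cons M t => exact ⟨M, t, rfl⟩
  rw [topSum, topSum, sortDesc_erase_headI hl, ht]
  simp

theorem nonneg_of_mem_sortDesc {l : List ℝ} (h0 : ∀ a ∈ l, 0 ≤ a) {a : ℝ}
    (ha : a ∈ sortDesc l) : 0 ≤ a := h0 a ((sortDesc_perm l).mem_iff.mp ha)

theorem topSum_nonneg (k : ℕ) {l : List ℝ} (h0 : ∀ a ∈ l, 0 ≤ a) : 0 ≤ topSum k l :=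
  List.sum_nonneg fun a ha => nonneg_of_mem_sortDesc h0 (List.mem_of_mem_take ha)

theorem topSum_mono_k {j k : ℕ} (hjk : j ≤ k) {l : List ℝ} (h0 : ∀ a ∈ l, 0 ≤ a) :
    topSum j l ≤ topSum k l := by
  apply List.Sublist.sum_le_sum ((List.take_prefix_take_left hjk).sublist)
  exact fun a ha => nonneg_of_mem_sortDesc h0 (List.mem_of_mem_take ha)

theorem sum_le_topSum_aux (N : ℕ) : ∀ (l : List ℝ), l.length ≤ N → (∀ a ∈ l, 0 ≤ a) →
    ∀ (s : List ℝ), s.Subperm l → s.sum ≤ topSum s.length l := by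
  induction N with
  | zero =>
    intro l hlen h0 s hs
    have : l = [] := List.length_eq_zero_iff.mp (Nat.le_zero.mp hlen)
    subst this
    have : s = [] := List.subperm_nil.mp hs
    subst this
    simp [topSum_zero]
  | succ N ih =>
    intro l hlen h0 s hs
    have hps := sortDesc_perm s
    have hsum : s.sum = (sortDesc s).sum := hps.sum_eq.symm
    have hlen' : s.length = (sortDesc s).length := (sortDesc_length s).symm
    have hsub' : (sortDesc s).Subperm l := hps.subperm.trans hs
    cases h : sortDesc s with
    | nil =>
      rw [hsum, hlen', h]
      simp [topSum_zero]
    | cons b t =>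
      rw [h] at hsub' hsum hlen'
      have hlne : l ≠ [] := by
        rintro rfl
        exact absurd (List.subperm_nil.mp hsub') (by simp)
      set M := (sortDesc l).headI with hM
      have hMl : M ∈ l := headI_sortDesc_mem hlne
      have hbl : b ∈ l := hsub'.subset (by simp)
      have hbM : b ≤ M := le_headI_sortDesc hbl
      have htsub : t.Subperm (l.erase M) := by
        by_cases hMs : M ∈ (b :: t)
        · have hMb : M ≤ b := by
            have hms : M ∈ s := hps.subset (h ▸ hMs)
            have := le_headI_sortDesc hms
            rwa [h, List.headI_cons] at this
          have hbeq : b = M := le_antisymm hbM hMb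
          have := hsub'.erase b
          rw [List.erase_cons_head] at this
          rwa [hbeq] at this
        · have : (b :: t).Subperm (l.erase M) := by
            rw [List.subperm_ext_iff]
            intro x hx
            have hxM : x ≠ M := by rintro rfl; exact hMs hx
            rw [List.count_erase_of_ne hxM]
            exact List.subperm_ext_iff.mp hsub' x hx
          exact (List.sublist_cons_self b t).subperm.trans this
      have hlenerase : (l.erase M).length ≤ N := by
        rw [List.length_erase_of_mem hMl]
        omega
      have h0' : ∀ a ∈ l.erase M, 0 ≤ a := fun a ha => h0 a (List.mem_of_mem_erase ha)
      have hIH := ih (l.erase M) hlenerase h0' t htsub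
      rw [hsum, hlen']
      simp only [List.sum_cons, List.length_cons]
      rw [topSum_succ hlne]
      exact add_le_add hbM hIH

theorem sum_le_topSum {l s : List ℝ} (h0 : ∀ a ∈ l, 0 ≤ a) (hs : s.Subperm l) :
    s.sum ≤ topSum s.length l :=
  sum_le_topSum_aux l.length l le_rfl h0 s hs

theorem topSum_subperm_mono {l₁ l₂ : List ℝ} (h : l₁.Subperm l₂) (h0 : ∀ a ∈ l₂, 0 ≤ a) (k : ℕ) :
    topSum k l₁ ≤ topSum k l₂ := by
  have hs : ((sortDesc l₁).take k).Subperm l₂ :=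
    (((sortDesc l₁).take_sublist k).subperm.trans (sortDesc_perm l₁).subperm).trans h
  have h1 : topSum k l₁ = ((sortDesc l₁).take k).sum := rfl
  have h2 := sum_le_topSum h0 hs
  refine h1 ▸ h2.trans (topSum_mono_k ?_ h0)
  exact (List.length_take).le.trans (min_le_left _ _)

theorem median_bound (l : List ℝ) (hl : l ≠ []) (h0 : ∀ a ∈ l, 0 ≤ a) :
    |listLowerMedian l - l.sum / l.length| ≤ topSum (l.length / 2) l / l.length := by
  set y := sortAsc l with hy
  set i := l.length with hi
  have hyl : y.length = i := sortAsc_length l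
  have hi1 : 1 ≤ i := by
    rw [hi, Nat.one_le_iff_ne_zero]
    simpa using hl
  set d := (i - 1) / 2 with hd
  set k := i / 2 with hk
  have hdi : d < i := by omega
  have hdy : d < y.length := by omega
  have hky : i - k = d + 1 := by omega
  have hdk : d ≤ k := by omega
  have hik : i = d + 1 + k := by omega
  have h0y : ∀ a ∈ y, 0 ≤ a := fun a ha => h0 a ((sortAsc_perm l).subset ha)
  set m := y[d] with hm
  have hmed : listLowerMedian l = m := by
    rw [listLowerMedian, hm]
    exact List.getD_eq_getElem _ _ hdy
  set A := (y.take d).sum with hA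
  set B := (y.drop (d+1)).sum with hB
  have hsum : l.sum = A + m + B := by
    have h1 : l.sum = y.sum := ((sortAsc_perm l).sum_eq).symm
    have h2 : (y.take d).sum + (y.drop d).sum = y.sum := List.sum_take_add_sum_drop y d
    have h3 : y.drop d = m :: y.drop (d+1) := List.drop_eq_getElem_cons hdy
    rw [h1, ← h2, h3]
    simp [add_assoc, hA, hB]
  have htop : topSum k l = B := by
    rw [topSum]
    have : sortDesc l = y.reverse := rfl
    rw [this, List.take_reverse, hyl, hky, List.sum_reverse]
  -- sorted bounds
  have hsorted := List.pairwise_iff_getElem.mp (sortAsc_sorted l)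
  have hAd : A ≤ (d : ℝ) * m := by
    have h1 : ∀ x ∈ y.take d, x ≤ m := by
      intro x hx
      obtain ⟨j, hj, hxj⟩ := List.mem_iff_getElem.mp hx
      rw [List.length_take] at hj
      have hjd : j < d := lt_of_lt_of_le hj (min_le_left _ _)
      rw [List.getElem_take] at hxj
      exact hxj ▸ hsorted j d (hjd.trans hdy) hdy hjd
    have := List.sum_le_card_nsmul (y.take d) m h1
    rwa [List.length_take, min_eq_left (by omega), nsmul_eq_mul] at this
  have hA0 : 0 ≤ A := List.sum_nonneg fun a ha => h0y a (List.mem_of_mem_take ha)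
  have hm0 : 0 ≤ m := h0y m (List.getElem_mem hdy)
  have hBk : (k : ℝ) * m ≤ B := by
    have hlen : (y.drop (d+1)).length = k := by
      rw [List.length_drop]; omega
    have h1 : ∀ x ∈ y.drop (d+1), m ≤ x := by
      intro x hx
      obtain ⟨j, hj, hxj⟩ := List.mem_iff_getElem.mp hx
      have hj' : j < k := by rwa [hlen] at hj
      rw [List.getElem_drop] at hxj
      refine hxj ▸ hsorted d (d+1+j) hdy ?_ (by omega)
      rw [hyl]; omega
    have := List.card_nsmul_le_sum (y.drop (d+1)) m h1
    rwa [hlen, nsmul_eq_mul] at this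
  have hipos : (0:ℝ) < (i:ℝ) := by exact_mod_cast hi1
  have hikR : (i:ℝ) = (d:ℝ) + 1 + (k:ℝ) := by exact_mod_cast congrArg (Nat.cast : ℕ → ℝ) hik
  have hdkR : (d:ℝ) ≤ (k:ℝ) := by exact_mod_cast hdk
  have key : |m * i - (A + m + B)| ≤ B := by
    rw [abs_le]
    constructor
    · nlinarith [mul_le_mul_of_nonneg_right hdkR hm0, mul_nonneg (Nat.cast_nonneg k : (0:ℝ) ≤ k) hm0]
    · nlinarith [mul_le_mul_of_nonneg_right hdkR hm0, mul_nonneg (Nat.cast_nonneg k : (0:ℝ) ≤ k) hm0]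
  rw [hmed, hsum, htop]
  have heq : m - (A + m + B) / i = (m * i - (A + m + B)) / i := by
    field_simp
  rw [heq, abs_div, abs_of_pos hipos]
  exact div_le_div_of_nonneg_right key hipos.le

theorem discrete_hardy (p : ℝ) (hp : 1 < p) (n : ℕ) (z : ℕ → ℝ) (hz : ∀ r, 0 ≤ z r) :
    ∑ k ∈ Finset.Icc 1 n, ((∑ r ∈ Finset.Icc 1 k, z r) / k) ^ p
      ≤ (p / (p-1)) ^ p * ∑ r ∈ Finset.Icc 1 n, z r ^ p := by
  have hp0 : 0 < p := lt_trans one_pos hp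
  have hp1 : 0 < p - 1 := by linarith
  set A : ℕ → ℝ := fun k => (∑ r ∈ Finset.Icc 1 k, z r) / k with hAdef
  have hA0 : ∀ k, 0 ≤ A k := fun k =>
    div_nonneg (Finset.sum_nonneg fun r _ => hz r) (Nat.cast_nonneg k)
  have hmul : ∀ j : ℕ, (j : ℝ) * A j = ∑ r ∈ Finset.Icc 1 j, z r := by
    intro j
    rcases Nat.eq_zero_or_pos j with rfl | hj
    · simp
    · rw [hAdef]
      field_simp
  have hAz : ∀ j : ℕ, ((j:ℝ)+1) * A (j+1) - (j:ℝ) * A j = z (j+1) := by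
    intro j
    have h1 := hmul (j+1)
    have h2 := hmul j
    rw [Finset.sum_Icc_succ_top (by omega : 1 ≤ j + 1)] at h1
    push_cast at h1
    linarith
  -- pointwise key inequality
  have key : ∀ j : ℕ, (p-1) * A (j+1) ^ p ≤
      p * (A (j+1) ^ (p-1) * z (j+1)) + ((j:ℝ) * A j ^ p - ((j:ℝ)+1) * A (j+1) ^ p) := by
    intro j
    set a := A (j+1) with ha'
    set b := A j with hb'
    have ha : 0 ≤ a := hA0 _
    have hb : 0 ≤ b := hA0 _
    have hzz : z (j+1) = ((j:ℝ)+1) * a - (j:ℝ) * b := (hAz j).symm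
    have haap : a ^ (p-1) * a = a ^ p := by
      rcases ha.eq_or_lt with h | h
      · rw [← h]
        rw [Real.zero_rpow (by linarith), Real.zero_rpow (by linarith)]
        ring
      · rw [← Real.rpow_add_one (ne_of_gt h)]
        norm_num
    have hqp : (p/(p-1)).HolderConjugate p := (Real.HolderConjugate.conjExponent hp).symm
    have young : a ^ (p-1) * b ≤ (p-1)/p * a ^ p + 1/p * b ^ p := by
      have h := Real.young_inequality_of_nonneg (Real.rpow_nonneg ha (p-1)) hb hqp
      have e1 : (a ^ (p-1)) ^ (p/(p-1)) = a ^ p := by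
        rw [← Real.rpow_mul ha]
        congr 1
        field_simp
      rw [e1] at h
      calc a ^ (p-1) * b ≤ a ^ p / (p/(p-1)) + b ^ p / p := h
        _ = (p-1)/p * a ^ p + 1/p * b ^ p := by field_simp
    have young' : p * (a ^ (p-1) * b) ≤ (p-1) * a ^ p + b ^ p := by
      have := mul_le_mul_of_nonneg_left young hp0.le
      calc p * (a ^ (p-1) * b) ≤ p * ((p-1)/p * a ^ p + 1/p * b ^ p) := this
        _ = (p-1) * a ^ p + b ^ p := by field_simp
    have hj0 : (0:ℝ) ≤ (j:ℝ) := Nat.cast_nonneg j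
    have young'' := mul_le_mul_of_nonneg_left young' hj0
    rw [hzz]
    have expand : p * (a ^ (p-1) * (((j:ℝ)+1) * a - (j:ℝ) * b))
        = p * ((j:ℝ)+1) * (a ^ (p-1) * a) - (j:ℝ) * (p * (a ^ (p-1) * b)) := by ring
    rw [expand, haap]
    nlinarith [young'', Real.rpow_nonneg ha p, Real.rpow_nonneg hb p]
  -- sum up
  set U := ∑ k ∈ Finset.Icc 1 n, A k ^ p with hU
  set V := ∑ r ∈ Finset.Icc 1 n, z r ^ p with hV
  set T := ∑ k ∈ Finset.Icc 1 n, A k ^ (p-1) * z k with hT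
  have hU0 : 0 ≤ U := Finset.sum_nonneg fun k _ => Real.rpow_nonneg (hA0 k) p
  have hV0 : 0 ≤ V := Finset.sum_nonneg fun r _ => Real.rpow_nonneg (hz r) p
  have htele : ∑ j ∈ Finset.Icc 1 n, (((j:ℝ)-1) * A (j-1) ^ p - (j:ℝ) * A j ^ p) ≤ 0 := by
    have conv : ∀ m : ℕ, ∑ j ∈ Finset.Icc 1 m, (((j:ℝ)-1) * A (j-1) ^ p - (j:ℝ) * A j ^ p)
        = ∑ i ∈ Finset.range m, (((i:ℝ)) * A i ^ p - ((i:ℝ)+1) * A (i+1) ^ p) := by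
      intro m
      induction m with
      | zero => simp
      | succ m ih =>
        rw [Finset.sum_Icc_succ_top (by omega : 1 ≤ m + 1), ih, Finset.sum_range_succ]
        push_cast
        simp
    rw [conv n]
    have := Finset.sum_range_sub' (f := fun i => (i:ℝ) * A i ^ p) n
    push_cast at this
    rw [this]
    have h0n : (0:ℝ) ≤ (n:ℝ) * A n ^ p := mul_nonneg (Nat.cast_nonneg n) (Real.rpow_nonneg (hA0 n) p)
    push_cast
    linarith
  have hsum1 : (p-1) * U ≤ p * T := by
    have step : ∀ j ∈ Finset.Icc 1 n, (p-1) * A j ^ p ≤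
        p * (A j ^ (p-1) * z j) + (((j:ℝ)-1) * A (j-1) ^ p - (j:ℝ) * A j ^ p) := by
      intro j hj
      have hj1 : 1 ≤ j := (Finset.mem_Icc.mp hj).1
      obtain ⟨i, rfl⟩ : ∃ i, j = i + 1 := ⟨j - 1, by omega⟩
      have := key i
      push_cast
      simpa using this
    calc (p-1) * U = ∑ j ∈ Finset.Icc 1 n, (p-1) * A j ^ p := by rw [Finset.mul_sum]
      _ ≤ ∑ j ∈ Finset.Icc 1 n, (p * (A j ^ (p-1) * z j)
            + (((j:ℝ)-1) * A (j-1) ^ p - (j:ℝ) * A j ^ p)) := Finset.sum_le_sum step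
      _ = p * T + ∑ j ∈ Finset.Icc 1 n, (((j:ℝ)-1) * A (j-1) ^ p - (j:ℝ) * A j ^ p) := by
          rw [Finset.sum_add_distrib, Finset.mul_sum]
      _ ≤ p * T := by linarith [htele]
  -- Holder
  have hqp : (p/(p-1)).HolderConjugate p := (Real.HolderConjugate.conjExponent hp).symm
  have holder : T ≤ U ^ (1/(p/(p-1))) * V ^ (1/p) := by
    have h := Real.inner_le_Lp_mul_Lq_of_nonneg (Finset.Icc 1 n)
      (f := fun k => A k ^ (p-1)) (g := z) hqp
      (fun i _ => Real.rpow_nonneg (hA0 i) _) (fun i _ => hz i)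
    have e1 : ∀ k, (A k ^ (p-1)) ^ (p/(p-1)) = A k ^ p := by
      intro k
      rw [← Real.rpow_mul (hA0 k)]
      congr 1
      field_simp
    calc T ≤ (∑ k ∈ Finset.Icc 1 n, (A k ^ (p-1)) ^ (p/(p-1))) ^ (1/(p/(p-1)))
          * (∑ r ∈ Finset.Icc 1 n, z r ^ p) ^ (1/p) := h
      _ = U ^ (1/(p/(p-1))) * V ^ (1/p) := by
          rw [hU]
          congr 2
          exact Finset.sum_congr rfl fun k _ => e1 k
  -- conclude
  have main : U ≤ (p/(p-1)) * U ^ (1/(p/(p-1))) * V ^ (1/p) := by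
    have h2 : (p-1) * U ≤ p * (U ^ (1/(p/(p-1))) * V ^ (1/p)) :=
      hsum1.trans (mul_le_mul_of_nonneg_left holder hp0.le)
    rw [div_mul_eq_mul_div, div_mul_eq_mul_div, le_div_iff₀ hp1]
    calc U * (p-1) = (p-1) * U := by ring
      _ ≤ p * (U ^ (1/(p/(p-1))) * V ^ (1/p)) := h2
      _ = p * U ^ (1/(p/(p-1))) * V ^ (1/p) := by ring
  rcases hU0.eq_or_lt with h | hUpos
  · rw [← h]
    positivity
  · have hexp : 1/p + 1/(p/(p-1)) = 1 := by
      rw [one_div, one_div]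
      exact hqp.symm.inv_add_inv_eq_one
    have hsplit : U = U ^ (1/p) * U ^ (1/(p/(p-1))) := by
      rw [← Real.rpow_add hUpos, hexp, Real.rpow_one]
    have hcancel : U ^ (1/p) ≤ (p/(p-1)) * V ^ (1/p) := by
      have hq0 : 0 < U ^ (1/(p/(p-1))) := Real.rpow_pos_of_pos hUpos _
      have := main
      rw [hsplit] at this
      calc U ^ (1/p) = U ^ (1/p) * U ^ (1/(p/(p-1))) / U ^ (1/(p/(p-1))) := by
            field_simp
        _ ≤ (p/(p-1)) * U ^ (1/(p/(p-1))) * V ^ (1/p) / U ^ (1/(p/(p-1))) := by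
            apply div_le_div_of_nonneg_right _ hq0.le
            calc U ^ (1/p) * U ^ (1/(p/(p-1))) = U := hsplit.symm
              _ ≤ (p/(p-1)) * U ^ (1/(p/(p-1))) * V ^ (1/p) := main
        _ = (p/(p-1)) * V ^ (1/p) := by field_simp
    have hfinal := Real.rpow_le_rpow (Real.rpow_nonneg hU0 _) hcancel hp0.le
    have e2 : (U ^ (1/p)) ^ p = U := by
      rw [← Real.rpow_mul hU0]
      field_simp
      rw [Real.rpow_one]
    have e3 : ((p/(p-1)) * V ^ (1/p)) ^ p = (p/(p-1)) ^ p * V := by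
      rw [Real.mul_rpow (by positivity) (Real.rpow_nonneg hV0 _), ← Real.rpow_mul hV0]
      congr 1
      field_simp
      rw [Real.rpow_one]
    rw [e2, e3] at hfinal
    exact hfinal

theorem list_take_sum (l : List ℝ) : ∀ (k : ℕ), k ≤ l.length →
    (l.take k).sum = ∑ r ∈ Finset.range k, l.getD r 0 := by
  intro k
  induction k with
  | zero => simp
  | succ k ih =>
    intro hk
    rw [List.sum_take_succ l k (by omega), ih (by omega), Finset.sum_range_succ,
      List.getD_eq_getElem l 0 (by omega)]

theorem list_map_sum_eq (f : ℝ → ℝ) : ∀ (l : List ℝ),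
    (l.map f).sum = ∑ r ∈ Finset.range l.length, f (l.getD r 0) := by
  intro l
  induction l with
  | nil => simp
  | cons a t ih =>
    rw [List.map_cons, List.sum_cons, List.length_cons, Finset.sum_range_succ', ih]
    simp [add_comm]

theorem range_map_sum (g : ℕ → ℝ) : ∀ (n : ℕ),
    ((List.range n).map g).sum = ∑ j ∈ Finset.range n, g j := by
  intro n
  induction n with
  | zero => simp
  | succ n ih =>
    rw [List.range_succ, List.map_append, List.sum_append, ih, Finset.sum_range_succ]
    simp

theorem twofold (n : ℕ) (g : ℕ → ℝ) (hg : ∀ k, 0 ≤ g k) :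
    ∑ i ∈ Finset.Icc 2 n, g (i/2) ≤ 2 * ∑ k ∈ Finset.Icc 1 n, g k := by
  have half : ∀ (P : ℕ → Prop) (_ : DecidablePred P),
      (∀ i ∈ Finset.Icc 2 n, ∀ j ∈ Finset.Icc 2 n, P i → P j → i/2 = j/2 → i = j) →
      ∑ i ∈ (Finset.Icc 2 n).filter P, g (i/2) ≤ ∑ k ∈ Finset.Icc 1 n, g k := by
    intro P _ hinj
    have hinj' : ∀ i ∈ (Finset.Icc 2 n).filter P, ∀ j ∈ (Finset.Icc 2 n).filter P,
        i/2 = j/2 → i = j := by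
      intro i hi j hj hij
      have hi' := Finset.mem_filter.mp hi
      have hj' := Finset.mem_filter.mp hj
      exact hinj i hi'.1 j hj'.1 hi'.2 hj'.2 hij
    calc ∑ i ∈ (Finset.Icc 2 n).filter P, g (i/2)
        = ∑ k ∈ ((Finset.Icc 2 n).filter P).image (fun i => i/2), g k :=
          (Finset.sum_image (f := g) (g := fun i => i/2) hinj').symm
      _ ≤ ∑ k ∈ Finset.Icc 1 n, g k := by
          apply Finset.sum_le_sum_of_subset_of_nonneg
          · intro k hk
            obtain ⟨i, hi, rfl⟩ := Finset.mem_image.mp hk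
            have := Finset.mem_Icc.mp (Finset.mem_filter.mp hi).1
            rw [Finset.mem_Icc]
            omega
          · intro k _ _
            exact hg k
  have h1 := half (fun i => i % 2 = 0) (by infer_instance) (by intro i hi j hj hpi hpj hij; omega)
  have h2 := half (fun i => ¬ (i % 2 = 0)) (by infer_instance) (by intro i hi j hj hpi hpj hij; omega)
  have := Finset.sum_filter_add_sum_filter_not (Finset.Icc 2 n) (fun i => i % 2 = 0)
    (fun i => g (i/2))
  linarith

theorem sum_Icc_one (f : ℕ → ℝ) (m : ℕ) :
    ∑ k ∈ Finset.Icc 1 m, f k = ∑ j ∈ Finset.range m, f (j+1) := by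
  rw [← Finset.Ico_add_one_right_eq_Icc, Finset.sum_Ico_eq_sum_range]
  simp [add_comm]

theorem median_hardy_stmt16 (p : ℝ) (hp : 1 < p) (n : ℕ) (hn : 1 ≤ n) (x : ℕ → ℝ)
    (hx : ∀ j, 1 ≤ j → j ≤ n → 0 ≤ x j) :
    ∑ i ∈ Finset.Icc 1 n,
        |listLowerMedian (seg x i) - (∑ j ∈ Finset.Icc 1 i, x j) / i| ^ p
      ≤ 2 ^ (1 - p) * (p / (p - 1)) ^ p * ∑ i ∈ Finset.Icc 1 n, x i ^ p := by
  have hp0 : 0 < p := lt_trans one_pos hp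
  have hseg_len : ∀ i : ℕ, (seg x i).length = i := by intro i; simp [seg]
  have hseg_nonneg : ∀ i, i ≤ n → ∀ a ∈ seg x i, 0 ≤ a := by
    intro i hin a ha
    simp only [seg, List.mem_map, List.mem_range] at ha
    obtain ⟨j, hj, rfl⟩ := ha
    exact hx (j+1) (by omega) (by omega)
  have hLnonneg := hseg_nonneg n le_rfl
  have hsum_seg : ∀ i : ℕ, (seg x i).sum = ∑ j ∈ Finset.Icc 1 i, x j := by
    intro i
    rw [seg, range_map_sum, sum_Icc_one]
  have hsub : ∀ i, i ≤ n → (seg x i).Sublist (seg x n) := by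
    intro i hin
    have h : seg x i = (seg x n).take i := by
      rw [seg, seg, ← List.map_take, List.take_range, min_eq_left hin]
    rw [h]
    exact List.take_sublist _ _
  set S : ℕ → ℝ := fun k => topSum k (seg x n) with hS
  set z : ℕ → ℝ := fun r => (sortDesc (seg x n)).getD (r-1) 0 with hzdef
  have hylen : (sortDesc (seg x n)).length = n := by rw [sortDesc_length, hseg_len]
  have hznn : ∀ r, 0 ≤ z r := by
    intro r
    show 0 ≤ (sortDesc (seg x n)).getD (r-1) 0
    by_cases h : r - 1 < (sortDesc (seg x n)).length
    · rw [List.getD_eq_getElem _ _ h]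
      exact nonneg_of_mem_sortDesc hLnonneg (List.getElem_mem h)
    · rw [List.getD_eq_default _ _ (by omega)]
  have hS0 : ∀ k, 0 ≤ S k := fun k => topSum_nonneg k hLnonneg
  have hSz : ∀ k, k ≤ n → S k = ∑ r ∈ Finset.Icc 1 k, z r := by
    intro k hk
    show topSum k (seg x n) = _
    rw [topSum, list_take_sum _ k (by rw [hylen]; exact hk), sum_Icc_one]
    simp [hzdef]
  have hzx : ∑ r ∈ Finset.Icc 1 n, z r ^ p = ∑ i ∈ Finset.Icc 1 n, x i ^ p := by
    have e1 : ∑ r ∈ Finset.Icc 1 n, z r ^ p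
        = ∑ r ∈ Finset.range n, ((sortDesc (seg x n)).getD r 0) ^ p := by
      rw [sum_Icc_one]
      simp [hzdef]
    have e2 : ((sortDesc (seg x n)).map (fun t => t ^ p)).sum
        = ∑ r ∈ Finset.range n, ((sortDesc (seg x n)).getD r 0) ^ p := by
      rw [list_map_sum_eq, hylen]
    have e3 : ((sortDesc (seg x n)).map (fun t => t ^ p)).sum
        = ((seg x n).map (fun t => t ^ p)).sum :=
      ((sortDesc_perm (seg x n)).map _).sum_eq
    have e4 : ((seg x n).map (fun t => t ^ p)).sum = ∑ i ∈ Finset.Icc 1 n, x i ^ p := by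
      rw [seg, List.map_map, range_map_sum, sum_Icc_one (fun i => x i ^ p)]
      simp [Function.comp]
    rw [e1, ← e2, e3, e4]
  have step1 : ∀ i ∈ Finset.Icc 1 n,
      |listLowerMedian (seg x i) - (∑ j ∈ Finset.Icc 1 i, x j) / i| ^ p ≤ (S (i/2) / i) ^ p := by
    intro i hi
    rw [Finset.mem_Icc] at hi
    have hne : seg x i ≠ [] := by
      intro h
      have h2 := hseg_len i
      rw [h] at h2
      simp at h2
      omega
    have hb := median_bound (seg x i) hne (hseg_nonneg i hi.2)
    rw [hseg_len, hsum_seg] at hb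
    have hmono : topSum (i/2) (seg x i) ≤ S (i/2) :=
      topSum_subperm_mono ((hsub i hi.2).subperm) hLnonneg _
    have hipos : (0:ℝ) < i := by exact_mod_cast Nat.lt_of_lt_of_le Nat.zero_lt_one hi.1
    have hb2 : |listLowerMedian (seg x i) - (∑ j ∈ Finset.Icc 1 i, x j) / i| ≤ S (i/2) / i :=
      hb.trans (div_le_div_of_nonneg_right hmono hipos.le)
    exact Real.rpow_le_rpow (abs_nonneg _) hb2 hp0.le
  have step2 : ∑ i ∈ Finset.Icc 2 n, (S (i/2) / i) ^ p = ∑ i ∈ Finset.Icc 1 n, (S (i/2) / i) ^ p := by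
    apply Finset.sum_subset (fun i hi => by rw [Finset.mem_Icc] at *; constructor <;> omega)
    intro i hi hni
    rw [Finset.mem_Icc] at hi hni
    have h1 : i = 1 := by omega
    subst h1
    have e : (1:ℕ)/2 = 0 := rfl
    rw [e, show S 0 = 0 from topSum_zero _, zero_div, Real.zero_rpow hp0.ne']
  have step3 : ∀ i ∈ Finset.Icc 2 n, (S (i/2) / i) ^ p ≤ 2 ^ (-p) * (S (i/2) / (i/2 : ℕ)) ^ p := by
    intro i hi
    rw [Finset.mem_Icc] at hi
    have hk1 : 1 ≤ i/2 := by omega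
    have h2k : 2 * (i/2) ≤ i := by omega
    have hkpos : (0:ℝ) < (i/2 : ℕ) := by exact_mod_cast hk1
    have hipos : (0:ℝ) < i := by exact_mod_cast (by omega : 0 < i)
    have h2kR : 2 * ((i/2 : ℕ):ℝ) ≤ (i:ℝ) := by exact_mod_cast h2k
    have h1 : S (i/2) / i ≤ S (i/2) / (2 * ((i/2 : ℕ):ℝ)) :=
      div_le_div_of_nonneg_left (hS0 _) (by positivity) h2kR
    have h2 : S (i/2) / (2 * ((i/2 : ℕ):ℝ)) = 2⁻¹ * (S (i/2) / (i/2 : ℕ)) := by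
      field_simp
    calc (S (i/2) / i) ^ p ≤ (S (i/2) / (2 * ((i/2 : ℕ):ℝ))) ^ p :=
          Real.rpow_le_rpow (div_nonneg (hS0 _) hipos.le) h1 hp0.le
      _ = (2⁻¹) ^ p * (S (i/2) / (i/2 : ℕ)) ^ p := by
          rw [h2, Real.mul_rpow (by norm_num) (div_nonneg (hS0 _) hkpos.le)]
      _ = 2 ^ (-p) * (S (i/2) / (i/2 : ℕ)) ^ p := by
          rw [Real.inv_rpow (by norm_num), ← Real.rpow_neg (by norm_num)]
  have hg0 : ∀ k : ℕ, 0 ≤ (S k / (k:ℝ)) ^ p := fun k =>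
    Real.rpow_nonneg (div_nonneg (hS0 k) (Nat.cast_nonneg k)) p
  have hhar : ∑ k ∈ Finset.Icc 1 n, (S k / (k:ℝ)) ^ p
      ≤ (p/(p-1)) ^ p * ∑ r ∈ Finset.Icc 1 n, z r ^ p := by
    have hh := discrete_hardy p hp n z hznn
    have e : ∑ k ∈ Finset.Icc 1 n, (S k / (k:ℝ)) ^ p
        = ∑ k ∈ Finset.Icc 1 n, ((∑ r ∈ Finset.Icc 1 k, z r) / k) ^ p := by
      apply Finset.sum_congr rfl
      intro k hk
      rw [Finset.mem_Icc] at hk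
      rw [hSz k hk.2]
    rw [e]
    exact hh
  calc ∑ i ∈ Finset.Icc 1 n,
        |listLowerMedian (seg x i) - (∑ j ∈ Finset.Icc 1 i, x j) / i| ^ p
      ≤ ∑ i ∈ Finset.Icc 1 n, (S (i/2) / i) ^ p := Finset.sum_le_sum step1
    _ = ∑ i ∈ Finset.Icc 2 n, (S (i/2) / i) ^ p := step2.symm
    _ ≤ ∑ i ∈ Finset.Icc 2 n, 2 ^ (-p) * (S (i/2) / ((i/2 : ℕ):ℝ)) ^ p := Finset.sum_le_sum step3
    _ = 2 ^ (-p) * ∑ i ∈ Finset.Icc 2 n, (S (i/2) / ((i/2 : ℕ):ℝ)) ^ p := by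
        rw [← Finset.mul_sum]
    _ ≤ 2 ^ (-p) * (2 * ∑ k ∈ Finset.Icc 1 n, (S k / (k:ℝ)) ^ p) := by
        apply mul_le_mul_of_nonneg_left
          (twofold n (fun k => (S k / (k:ℝ)) ^ p) hg0)
          (Real.rpow_nonneg (by norm_num) _)
    _ ≤ 2 ^ (-p) * (2 * ((p/(p-1)) ^ p * ∑ r ∈ Finset.Icc 1 n, z r ^ p)) := by
        apply mul_le_mul_of_nonneg_left
          (mul_le_mul_of_nonneg_left hhar (by norm_num))
          (Real.rpow_nonneg (by norm_num) _)
    _ = 2 ^ (1-p) * (p/(p-1)) ^ p * ∑ i ∈ Finset.Icc 1 n, x i ^ p := by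
        rw [hzx, show (1:ℝ) - p = 1 + -p by ring, Real.rpow_add two_pos, Real.rpow_one]
        ring
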